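/- Let K be a division ring, (G,<) an ordered group, and f a nonzero element of the center of the Malcev-Neumann series field K((G,<)). Then the support of f is contained in the center Z of the group G. -/

import Mathlib

/-- Let `K` be a division ring, `(G,<)` an ordered group, and `f` a
nonzero element of the centre of the Malcev-Neumann series field `K((G,<))`
(axiomatised by its coefficient function `coeff` and the embedding `emb` of `G`).
Then the support of `f` is contained in the centre of `G`. -/
theorem central_series_support_in_center
    (K G D : Type*) [DivisionRing K] [Group G] [LinearOrder G]
    [CovariantClass G G (· * ·) (· ≤ ·)]
    [CovariantClass G G (Function.swap (· * ·)) (· ≤ ·)]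
    [Ring D] (coeff : D → G → K)
    (hext : Function.Injective coeff)
    (hadd : ∀ f g : D, ∀ x : G, coeff (f + g) x = coeff f x + coeff g x)
    (hwf : ∀ f : D, (Function.support (coeff f)).IsWF)
    (hsurj : ∀ F : G → K, (Function.support F).IsWF → ∃ f : D, coeff f = F)
    (hmul : ∀ f g : D, ∀ x : G, coeff (f * g) x =
      ∑ᶠ p : G × G, if p.1 * p.2 = x then coeff f p.1 * coeff g p.2 else 0)
    (emb : G → D) (hemb : ∀ g x : G, coeff (emb g) x = if x = g then 1 else 0)
    (f : D) (hf0 : f ≠ 0) (hf : ∀ d : D, d * f = f * d) :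
    ∀ x : G, coeff f x ≠ 0 → x ∈ Subgroup.center G := by
  -- key coefficient identity: coeff f (y * z * y⁻¹) = coeff f z
  have key : ∀ y z : G, coeff f (y * z * y⁻¹) = coeff f z := by
    intro y z
    have h1 : coeff (emb y * f) (y * z) = coeff f z := by
      rw [hmul]
      rw [finsum_eq_single _ ((y, z) : G × G)]
      · simp [hemb]
      · rintro ⟨a, b⟩ hne
        by_cases hay : a = y
        · subst hay
          have hab : a * b ≠ a * z := fun h => hne (Prod.ext rfl (mul_left_cancel h))
          simp [hab]
        · simp [hemb, hay]
    have h2 : coeff (f * emb y) (y * z) = coeff f (y * z * y⁻¹) := by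
      rw [hmul]
      rw [finsum_eq_single _ ((y * z * y⁻¹, y) : G × G)]
      · simp [hemb]
      · rintro ⟨a, b⟩ hne
        by_cases hby : b = y
        · have hab : a * b ≠ y * z := by
            intro h
            apply hne
            have ha : a = y * z * y⁻¹ := by
              rw [hby] at h
              rw [← h]
              group
            exact Prod.ext ha hby
          simp [hab]
        · simp [hemb, hby]
    rw [← h1, hf (emb y), h2]
  intro x hx
  rw [Subgroup.mem_center_iff]
  intro y
  -- conjugation by y is a strictly monotone bijection of the support
  set S : Set G := Function.support (coeff f) with hS
  have hmem : ∀ z : G, z ∈ S → y * z * y⁻¹ ∈ S := by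
    intro z hz
    simpa [S, Function.mem_support, key] using hz
  have hmem' : ∀ z : G, z ∈ S → y⁻¹ * z * y ∈ S := by
    intro z hz
    have := key y⁻¹ z
    simp only [inv_inv] at this
    simpa [S, Function.mem_support, this] using hz
  have hwfS : WellFounded fun a b : S => (a : G) < b := hwf f
  let φ : S → S := fun z => ⟨y * z * y⁻¹, hmem z z.2⟩
  let ψ : S → S := fun z => ⟨y⁻¹ * z * y, hmem' z z.2⟩
  have conj_lt : ∀ a b : G, a < b → y * a * y⁻¹ < y * b * y⁻¹ := by
    intro a b h
    have h1 : y * a ≤ y * b := mul_le_mul_right h.le y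
    have h2 : y * a * y⁻¹ ≤ y * b * y⁻¹ := mul_le_mul_left h1 y⁻¹
    refine lt_of_le_of_ne h2 ?_
    intro he
    exact h.ne (by
      have := mul_right_cancel he
      exact mul_left_cancel this)
  have conj_lt' : ∀ a b : G, a < b → y⁻¹ * a * y < y⁻¹ * b * y := by
    intro a b h
    have h1 : y⁻¹ * a ≤ y⁻¹ * b := mul_le_mul_right h.le y⁻¹
    have h2 : y⁻¹ * a * y ≤ y⁻¹ * b * y := mul_le_mul_left h1 y
    refine lt_of_le_of_ne h2 ?_
    intro he
    exact h.ne (by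
      have := mul_right_cancel he
      exact mul_left_cancel this)
  have hφ : StrictMono φ := fun a b h => conj_lt a b h
  have hψ : StrictMono ψ := fun a b h => conj_lt' a b h
  have hφle : ∀ s : S, s ≤ φ s := fun s => by haveI : WellFoundedLT S := ⟨hwfS⟩; exact hφ.id_le s
  have hψle : ∀ s : S, s ≤ ψ s := fun s => by haveI : WellFoundedLT S := ⟨hwfS⟩; exact hψ.id_le s
  have hfix : ∀ s : S, φ s = s := by
    intro s
    have h1 : s ≤ φ s := hφle s
    have h2 : φ s ≤ ψ (φ s) := hψle (φ s)
    have h3 : ψ (φ s) = s := by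
      apply Subtype.ext
      show y⁻¹ * (y * s * y⁻¹) * y = (s : G)
      group
    rw [h3] at h2
    exact le_antisymm h2 h1
  have hxs : (⟨x, hx⟩ : S) ∈ Set.univ := trivial
  have := hfix ⟨x, hx⟩
  have hxc : y * x * y⁻¹ = x := congrArg Subtype.val this
  calc y * x = (y * x * y⁻¹) * y := by group
    _ = x * y := by rw [hxc]
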